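/- Let m ≥ 0 and n ≥ m+4 be integers, and let r_{n,m}^+ denote the unique positive zero of N_{n,m}(x). Then r_{n,m}^+ < r_{n,m+1}^+. -/
import Mathlib

/-- The generalized Narayana polynomial `N_{n,m}(x)`, with the convention
`C(m, k-1) = 0` when `k = 0`. -/
noncomputable def genNarayana (n m : ℕ) (x : ℝ) : ℝ :=
  ∑ k ∈ Finset.range (n + 1),
    (((n.choose k : ℝ) * (m.choose k : ℝ)) -
      (if k = 0 then 0 else (n.choose (k + 1) : ℝ) * (m.choose (k - 1) : ℝ))) * x ^ k

namespace GNaux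

open Finset

/-- The coefficient of `x^k` in `genNarayana n m`. -/
noncomputable def c (n m k : ℕ) : ℝ :=
  ((n.choose k : ℝ) * (m.choose k : ℝ)) -
    (if k = 0 then 0 else (n.choose (k + 1) : ℝ) * (m.choose (k - 1) : ℝ))

lemma genNarayana_eq (n m : ℕ) (x : ℝ) :
    genNarayana n m x = ∑ k ∈ Finset.range (n + 1), c n m k * x ^ k := rfl

lemma c_zero (n m : ℕ) : c n m 0 = 1 := by simp [c]

lemma c_nonneg (n m k : ℕ) (hmn : m + 2 ≤ n) (h : k * (n - m) ≤ m) : 0 ≤ c n m k := by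
  rcases k with _ | j
  · simp [c]
  · have hd : 2 ≤ n - m := by omega
    have hjm : j + 1 ≤ m := by nlinarith [h, hd]
    have key : n.choose (j+2) * m.choose j ≤ n.choose (j+1) * m.choose (j+1) := by
      have h1 : n.choose (j+2) * (j+2) = n.choose (j+1) * (n - (j+1)) :=
        Nat.choose_succ_right_eq n (j+1)
      have h2 : m.choose (j+1) * (j+1) = m.choose j * (m - j) :=
        Nat.choose_succ_right_eq m j
      have hcross : (n - (j+1)) * (j+1) ≤ (j+2) * (m - j) := by
        have h3 : n - (j+1) = (n - m) + (m - (j+1)) := by omega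
        have h4 : m - j = (m - (j+1)) + 1 := by omega
        rw [h3, h4]
        set d := n - m with hdd
        set e := m - (j+1) with hee
        have h5 : (j+1) * d ≤ j + 1 + e := by
          have : m = j + 1 + e := by omega
          omega
        nlinarith [h5]
      have hmul : n.choose (j+2) * m.choose j * ((j+2)*(j+1)) ≤
          n.choose (j+1) * m.choose (j+1) * ((j+2)*(j+1)) := by
        calc n.choose (j+2) * m.choose j * ((j+2)*(j+1))
            = (n.choose (j+2) * (j+2)) * (m.choose j * (j+1)) := by ring
          _ = (n.choose (j+1) * (n - (j+1))) * (m.choose j * (j+1)) := by rw [h1]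
          _ = (n.choose (j+1) * m.choose j) * ((n - (j+1)) * (j+1)) := by ring
          _ ≤ (n.choose (j+1) * m.choose j) * ((j+2) * (m - j)) :=
              Nat.mul_le_mul_left _ hcross
          _ = (n.choose (j+1) * (j+2)) * (m.choose j * (m - j)) := by ring
          _ = (n.choose (j+1) * (j+2)) * (m.choose (j+1) * (j+1)) := by rw [h2]
          _ = n.choose (j+1) * m.choose (j+1) * ((j+2)*(j+1)) := by ring
      exact Nat.le_of_mul_le_mul_right hmul (by positivity)
    have key' : ((n.choose (j+2) : ℝ)) * (m.choose j) ≤ (n.choose (j+1) : ℝ) * (m.choose (j+1)) := by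
      exact_mod_cast key
    simp only [c, Nat.add_sub_cancel, if_neg (Nat.succ_ne_zero j)]
    linarith

lemma c_nonpos (n m k : ℕ) (hmn : m + 2 ≤ n) (h : m + 1 ≤ k * (n - m)) : c n m k ≤ 0 := by
  rcases k with _ | j
  · simp at h
  · by_cases hjm : j + 1 ≤ m
    · have key : n.choose (j+1) * m.choose (j+1) ≤ n.choose (j+2) * m.choose j := by
        have h1 : n.choose (j+2) * (j+2) = n.choose (j+1) * (n - (j+1)) :=
          Nat.choose_succ_right_eq n (j+1)
        have h2 : m.choose (j+1) * (j+1) = m.choose j * (m - j) :=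
          Nat.choose_succ_right_eq m j
        have hcross : (j+2) * (m - j) ≤ (n - (j+1)) * (j+1) := by
          have h3 : n - (j+1) = (n - m) + (m - (j+1)) := by omega
          have h4 : m - j = (m - (j+1)) + 1 := by omega
          rw [h3, h4]
          set d := n - m with hdd
          set e := m - (j+1) with hee
          have h5 : j + 2 + e ≤ (j+1) * d := by
            have : m = j + 1 + e := by omega
            omega
          nlinarith [h5]
        have hmul : n.choose (j+1) * m.choose (j+1) * ((j+2)*(j+1)) ≤
            n.choose (j+2) * m.choose j * ((j+2)*(j+1)) := by
          calc n.choose (j+1) * m.choose (j+1) * ((j+2)*(j+1))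
              = (n.choose (j+1) * (j+2)) * (m.choose (j+1) * (j+1)) := by ring
            _ = (n.choose (j+1) * (j+2)) * (m.choose j * (m - j)) := by rw [h2]
            _ = (n.choose (j+1) * m.choose j) * ((j+2) * (m - j)) := by ring
            _ ≤ (n.choose (j+1) * m.choose j) * ((n - (j+1)) * (j+1)) :=
                Nat.mul_le_mul_left _ hcross
            _ = (n.choose (j+1) * (n - (j+1))) * (m.choose j * (j+1)) := by ring
            _ = (n.choose (j+2) * (j+2)) * (m.choose j * (j+1)) := by rw [h1]
            _ = n.choose (j+2) * m.choose j * ((j+2)*(j+1)) := by ring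
        exact Nat.le_of_mul_le_mul_right hmul (by positivity)
      have key' : (n.choose (j+1) : ℝ) * (m.choose (j+1)) ≤ ((n.choose (j+2) : ℝ)) * (m.choose j) := by
        exact_mod_cast key
      simp only [c, Nat.add_sub_cancel, if_neg (Nat.succ_ne_zero j)]
      linarith
    · have hz : m.choose (j+1) = 0 := Nat.choose_eq_zero_of_lt (by omega)
      simp only [c, Nat.add_sub_cancel, if_neg (Nat.succ_ne_zero j), hz]
      have : (0:ℝ) ≤ (n.choose (j+2) : ℝ) * (m.choose j) := by positivity
      push_cast
      linarith

lemma P_ge_one (a : ℕ → ℝ) (N s : ℕ) (hs : 1 ≤ s) (hN : 0 < N)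
    (hpos : ∀ k, k < s → 0 ≤ a k) (ha0 : 1 ≤ a 0) {r : ℝ} (hr : 0 < r) :
    1 ≤ ∑ k ∈ (range N).filter (fun k => k < s), a k * r ^ k := by
  have h0 : 0 ∈ (range N).filter (fun k => k < s) := by
    simp only [Finset.mem_filter, Finset.mem_range]; exact ⟨hN, hs⟩
  have hsum := Finset.single_le_sum (f := fun k => a k * r ^ k)
    (fun k hk => by
      have hk' : k < s := (Finset.mem_filter.1 hk).2
      exact mul_nonneg (hpos k hk') (pow_nonneg hr.le k)) h0
  simp only [pow_zero, mul_one] at hsum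
  linarith

/-- If the coefficients are nonneg below `s` and nonpos from `s` on, with `a 0 ≥ 1`,
and `r` is a positive root, then the polynomial is positive on `(0, r)`. -/
lemma key_pos (a : ℕ → ℝ) (N s : ℕ) (hs : 1 ≤ s) (hN : 0 < N)
    (hpos : ∀ k, k < s → 0 ≤ a k) (ha0 : 1 ≤ a 0)
    (hneg : ∀ k, s ≤ k → a k ≤ 0)
    {r x : ℝ} (hx : 0 < x) (hxr : x < r)
    (hroot : ∑ k ∈ range N, a k * r ^ k = 0) :
    0 < ∑ k ∈ range N, a k * x ^ k := by
  have hr : 0 < r := hx.trans hxr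
  set t : ℝ := x / r with ht
  have ht0 : 0 < t := div_pos hx hr
  have ht1 : t < 1 := (div_lt_one hr).2 hxr
  have hrt : r * t = x := by rw [ht, mul_comm, div_mul_cancel₀ _ hr.ne']
  have hxrt : ∀ k : ℕ, x ^ k = r ^ k * t ^ k := by
    intro k; rw [← mul_pow, hrt]
  set P := ∑ k ∈ (range N).filter (fun k => k < s), a k * r ^ k with hP
  set Q := ∑ k ∈ (range N).filter (fun k => ¬ k < s), a k * r ^ k with hQ
  have hPQ : P + Q = 0 := by
    rw [hP, hQ, Finset.sum_filter_add_sum_filter_not]; exact hroot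
  have hP1 : 1 ≤ P := P_ge_one a N s hs hN hpos ha0 hr
  have hsplit : ∑ k ∈ range N, a k * x ^ k =
      (∑ k ∈ (range N).filter (fun k => k < s), a k * x ^ k) +
        (∑ k ∈ (range N).filter (fun k => ¬ k < s), a k * x ^ k) :=
    (Finset.sum_filter_add_sum_filter_not _ _ _).symm
  have hb1 : t ^ (s-1) * P ≤ ∑ k ∈ (range N).filter (fun k => k < s), a k * x ^ k := by
    rw [hP, Finset.mul_sum]
    apply Finset.sum_le_sum
    intro k hk
    have hk' : k < s := (Finset.mem_filter.1 hk).2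
    rw [hxrt k]
    have htt : t ^ (s-1) ≤ t ^ k :=
      pow_le_pow_of_le_one ht0.le ht1.le (by omega)
    have := mul_le_mul_of_nonneg_left htt (mul_nonneg (hpos k hk') (pow_nonneg hr.le k))
    nlinarith [this]
  have hb2 : t ^ s * Q ≤ ∑ k ∈ (range N).filter (fun k => ¬ k < s), a k * x ^ k := by
    rw [hQ, Finset.mul_sum]
    apply Finset.sum_le_sum
    intro k hk
    have hk' : s ≤ k := by
      have := (Finset.mem_filter.1 hk).2; omega
    rw [hxrt k]
    have htt : t ^ k ≤ t ^ s :=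
      pow_le_pow_of_le_one ht0.le ht1.le hk'
    have han : a k * r ^ k ≤ 0 := mul_nonpos_of_nonpos_of_nonneg (hneg k hk') (pow_nonneg hr.le k)
    nlinarith [mul_le_mul_of_nonpos_left htt han]
  have hts : t ^ s = t ^ (s-1) * t := by
    rw [← pow_succ]; congr 1; omega
  have hQP : Q = -P := by linarith
  have hfin : 0 < t ^ (s-1) * P + t ^ s * Q := by
    rw [hQP, hts]
    have h1 : 0 < t ^ (s-1) := pow_pos ht0 _
    have h2 : 0 < P * (1 - t) := by nlinarith
    nlinarith [mul_pos h1 h2]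
  linarith [hsplit, hb1, hb2, hfin]

/-- Same hypotheses; the polynomial is negative on `(r, ∞)`. -/
lemma key_neg (a : ℕ → ℝ) (N s : ℕ) (hs : 1 ≤ s) (hN : 0 < N)
    (hpos : ∀ k, k < s → 0 ≤ a k) (ha0 : 1 ≤ a 0)
    (hneg : ∀ k, s ≤ k → a k ≤ 0)
    {r x : ℝ} (hr : 0 < r) (hxr : r < x)
    (hroot : ∑ k ∈ range N, a k * r ^ k = 0) :
    ∑ k ∈ range N, a k * x ^ k < 0 := by
  set t : ℝ := x / r with ht
  have ht1 : 1 < t := (one_lt_div hr).2 hxr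
  have ht0 : 0 < t := lt_trans one_pos ht1
  have hrt : r * t = x := by rw [ht, mul_comm, div_mul_cancel₀ _ hr.ne']
  have hxrt : ∀ k : ℕ, x ^ k = r ^ k * t ^ k := by
    intro k; rw [← mul_pow, hrt]
  set P := ∑ k ∈ (range N).filter (fun k => k < s), a k * r ^ k with hP
  set Q := ∑ k ∈ (range N).filter (fun k => ¬ k < s), a k * r ^ k with hQ
  have hPQ : P + Q = 0 := by
    rw [hP, hQ, Finset.sum_filter_add_sum_filter_not]; exact hroot
  have hP1 : 1 ≤ P := P_ge_one a N s hs hN hpos ha0 hr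
  have hsplit : ∑ k ∈ range N, a k * x ^ k =
      (∑ k ∈ (range N).filter (fun k => k < s), a k * x ^ k) +
        (∑ k ∈ (range N).filter (fun k => ¬ k < s), a k * x ^ k) :=
    (Finset.sum_filter_add_sum_filter_not _ _ _).symm
  have hb1 : (∑ k ∈ (range N).filter (fun k => k < s), a k * x ^ k) ≤ t ^ (s-1) * P := by
    rw [hP, Finset.mul_sum]
    apply Finset.sum_le_sum
    intro k hk
    have hk' : k < s := (Finset.mem_filter.1 hk).2
    rw [hxrt k]
    have htt : t ^ k ≤ t ^ (s-1) := pow_le_pow_right₀ ht1.le (by omega)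
    nlinarith [mul_le_mul_of_nonneg_left htt (mul_nonneg (hpos k hk') (pow_nonneg hr.le k))]
  have hb2 : (∑ k ∈ (range N).filter (fun k => ¬ k < s), a k * x ^ k) ≤ t ^ s * Q := by
    rw [hQ, Finset.mul_sum]
    apply Finset.sum_le_sum
    intro k hk
    have hk' : s ≤ k := by
      have := (Finset.mem_filter.1 hk).2; omega
    rw [hxrt k]
    have htt : t ^ s ≤ t ^ k := pow_le_pow_right₀ ht1.le hk'
    have han : a k * r ^ k ≤ 0 := mul_nonpos_of_nonpos_of_nonneg (hneg k hk') (pow_nonneg hr.le k)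
    nlinarith [mul_le_mul_of_nonpos_left htt han]
  have hts : t ^ s = t ^ (s-1) * t := by
    rw [← pow_succ]; congr 1; omega
  have hQP : Q = -P := by linarith
  have hfin : t ^ (s-1) * P + t ^ s * Q < 0 := by
    rw [hQP, hts]
    have h1 : 0 < t ^ (s-1) := pow_pos ht0 _
    have h2 : P * (1 - t) < 0 := by nlinarith
    nlinarith [mul_neg_of_pos_of_neg h1 h2]
  linarith [hsplit, hb1, hb2, hfin]

/-- Weighted sum with antitone weights is positive at the root. -/
lemma lam_sum_pos (a lam : ℕ → ℝ) (N s : ℕ) (hs : 1 ≤ s) (hN : 0 < N)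
    (hpos : ∀ k, k < s → 0 ≤ a k) (ha0 : 1 ≤ a 0)
    (hneg : ∀ k, s ≤ k → a k ≤ 0)
    (hanti : ∀ j k : ℕ, j ≤ k → lam k ≤ lam j)
    (hstrict : lam s < lam (s - 1))
    {r : ℝ} (hr : 0 < r)
    (hroot : ∑ k ∈ range N, a k * r ^ k = 0) :
    0 < ∑ k ∈ range N, lam k * (a k * r ^ k) := by
  set P := ∑ k ∈ (range N).filter (fun k => k < s), a k * r ^ k with hP
  set Q := ∑ k ∈ (range N).filter (fun k => ¬ k < s), a k * r ^ k with hQ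
  have hPQ : P + Q = 0 := by
    rw [hP, hQ, Finset.sum_filter_add_sum_filter_not]; exact hroot
  have hP1 : 1 ≤ P := P_ge_one a N s hs hN hpos ha0 hr
  have hsplit : ∑ k ∈ range N, lam k * (a k * r ^ k) =
      (∑ k ∈ (range N).filter (fun k => k < s), lam k * (a k * r ^ k)) +
        (∑ k ∈ (range N).filter (fun k => ¬ k < s), lam k * (a k * r ^ k)) :=
    (Finset.sum_filter_add_sum_filter_not _ _ _).symm
  have hb1 : lam (s-1) * P ≤ ∑ k ∈ (range N).filter (fun k => k < s), lam k * (a k * r ^ k) := by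
    rw [hP, Finset.mul_sum]
    apply Finset.sum_le_sum
    intro k hk
    have hk' : k < s := (Finset.mem_filter.1 hk).2
    have hlk : lam (s-1) ≤ lam k := hanti k (s-1) (by omega)
    exact mul_le_mul_of_nonneg_right hlk (mul_nonneg (hpos k hk') (pow_nonneg hr.le k))
  have hb2 : lam s * Q ≤ ∑ k ∈ (range N).filter (fun k => ¬ k < s), lam k * (a k * r ^ k) := by
    rw [hQ, Finset.mul_sum]
    apply Finset.sum_le_sum
    intro k hk
    have hk' : s ≤ k := by
      have := (Finset.mem_filter.1 hk).2; omega
    have hlk : lam k ≤ lam s := hanti s k hk'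
    have han : a k * r ^ k ≤ 0 := mul_nonpos_of_nonpos_of_nonneg (hneg k hk') (pow_nonneg hr.le k)
    exact mul_le_mul_of_nonpos_right hlk han
  have hQP : Q = -P := by linarith
  have hfin : 0 < lam (s-1) * P + lam s * Q := by
    rw [hQP]
    nlinarith [hstrict, hP1]
  linarith [hsplit, hb1, hb2, hfin]

noncomputable def lam (n j : ℕ) : ℝ := ((n : ℝ) - j) / (j + 1)

noncomputable def cdiff (n m j : ℕ) : ℝ :=
  (n.choose (j+1) : ℝ) * (m.choose j : ℝ) -
    (if j = 0 then 0 else (n.choose (j+2) : ℝ) * (m.choose (j-1) : ℝ))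

lemma c_diff_eq (n m i : ℕ) : c n (m+1) (i+1) - c n m (i+1) = cdiff n m i := by
  rcases i with _ | j
  · simp [c, cdiff, Nat.choose_one_right]
    ring
  · simp only [c, cdiff, if_neg (Nat.succ_ne_zero _), Nat.add_sub_cancel]
    have p1 : (m+1).choose (j+2) = m.choose (j+1) + m.choose (j+2) := Nat.choose_succ_succ m (j+1)
    have p2 : (m+1).choose (j+1) = m.choose j + m.choose (j+1) := Nat.choose_succ_succ m j
    rw [p1, p2]
    push_cast
    ring

lemma narayana_succ (n m : ℕ) (x : ℝ) :
    genNarayana n (m+1) x = genNarayana n m x + x * ∑ j ∈ Finset.range n, cdiff n m j * x ^ j := by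
  have e1 : genNarayana n (m+1) x - genNarayana n m x =
      ∑ k ∈ Finset.range (n+1), (c n (m+1) k - c n m k) * x ^ k := by
    show (∑ k ∈ Finset.range (n+1), c n (m+1) k * x ^ k) -
      (∑ k ∈ Finset.range (n+1), c n m k * x ^ k) = _
    rw [← Finset.sum_sub_distrib]
    congr 1; funext k; ring
  have e2 : ∑ k ∈ Finset.range (n+1), (c n (m+1) k - c n m k) * x ^ k =
      x * ∑ j ∈ Finset.range n, cdiff n m j * x ^ j := by
    rw [Finset.sum_range_succ' (fun k => (c n (m+1) k - c n m k) * x ^ k) n]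
    have h0 : (c n (m+1) 0 - c n m 0) * x ^ 0 = 0 := by simp [c]
    rw [h0, add_zero, Finset.mul_sum]
    apply Finset.sum_congr rfl
    intro j _
    rw [c_diff_eq]
    ring
  linarith [e1, e2]

lemma lam_mul_choose (n j : ℕ) : lam n j * (n.choose j : ℝ) = (n.choose (j+1) : ℝ) := by
  rcases le_or_gt j n with hj | hj
  · have h := Nat.choose_succ_right_eq n j
    have hc : (n.choose (j+1) : ℝ) * (j+1) = (n.choose j : ℝ) * ((n:ℝ) - j) := by
      have := congrArg (Nat.cast : ℕ → ℝ) h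
      push_cast [Nat.cast_sub hj] at this
      linarith [this]
    rw [lam]
    have hj1 : ((j:ℝ) + 1) ≠ 0 := by positivity
    field_simp
    linarith [hc]
  · have h1 : n.choose (j+1) = 0 := Nat.choose_eq_zero_of_lt (by omega)
    have h2 : n.choose j = 0 := Nat.choose_eq_zero_of_lt hj
    simp [h1, h2]

lemma lam_succ_lt (n j : ℕ) : lam n (j+1) < lam n j := by
  rw [lam, lam]
  rw [div_lt_div_iff₀ (by positivity) (by positivity)]
  push_cast
  nlinarith [sq_nonneg ((j:ℝ))]

lemma lam_anti (n : ℕ) : ∀ j k : ℕ, j ≤ k → lam n k ≤ lam n j := by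
  intro j k hjk
  induction k with
  | zero => simp_all
  | succ i ih =>
    rcases Nat.lt_or_ge j (i+1) with h | h
    · exact le_trans (lam_succ_lt n i).le (ih (by omega))
    · have : j = i + 1 := by omega
      subst this; rfl

lemma lam_mul_c_le_cdiff (n m j : ℕ) : lam n j * c n m j ≤ cdiff n m j := by
  rcases j with _ | i
  · simp [lam, c, cdiff, Nat.choose_one_right]
  · have h1 := lam_mul_choose n (i+1)
    have h2 := lam_mul_choose n (i+2)
    have h3 : lam n (i+2) ≤ lam n (i+1) := (lam_succ_lt n (i+1)).le
    have hCD : (0:ℝ) ≤ (n.choose (i+2) : ℝ) * (m.choose i : ℝ) := by positivity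
    simp only [c, cdiff, if_neg (Nat.succ_ne_zero _), Nat.add_sub_cancel]
    nlinarith [h1, h2, h3, hCD, mul_le_mul_of_nonneg_right h3 hCD]

lemma c_top_zero (n m : ℕ) (hmn : m + 2 ≤ n) : c n m n = 0 := by
  have h1 : m.choose n = 0 := Nat.choose_eq_zero_of_lt (by omega)
  have h2 : m.choose (n-1) = 0 := Nat.choose_eq_zero_of_lt (by omega)
  simp [c, h1, h2]

end GNaux

open GNaux

theorem genNarayana_positive_zero_mono_in_m (m n : ℕ) (h : m + 4 ≤ n)
    (r r' : ℝ) (hr : 0 < r) (hroot : genNarayana n m r = 0)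
    (hr' : 0 < r') (hroot' : genNarayana n (m + 1) r' = 0) :
    r < r' := by
  have hmn : m + 2 ≤ n := by omega
  have hmn' : (m+1) + 2 ≤ n := by omega
  rw [genNarayana_eq] at hroot hroot'
  -- threshold for the coefficients of `N_{n,m}`
  have hex : ∃ k, m + 1 ≤ k * (n - m) := by
    refine ⟨m+1, ?_⟩
    have h1 : 1 ≤ n - m := by omega
    calc m + 1 = (m+1) * 1 := by ring
      _ ≤ (m+1) * (n - m) := Nat.mul_le_mul_left _ h1
  set s := Nat.find hex with hsdef
  have hs_spec : m + 1 ≤ s * (n - m) := Nat.find_spec hex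
  have hs1 : 1 ≤ s := by
    rcases Nat.eq_zero_or_pos s with h0 | h0
    · rw [h0] at hs_spec; simp at hs_spec
    · exact h0
  have hpos : ∀ k, k < s → 0 ≤ c n m k := fun k hk =>
    c_nonneg n m k hmn (by have := Nat.find_min hex hk; omega)
  have hneg : ∀ k, s ≤ k → c n m k ≤ 0 := fun k hk =>
    c_nonpos n m k hmn (hs_spec.trans (Nat.mul_le_mul_right _ hk))
  have ha0 : (1:ℝ) ≤ c n m 0 := by rw [c_zero]
  -- the weighted sum is positive
  have hstrict : lam n s < lam n (s - 1) := by
    have hss : s - 1 + 1 = s := by omega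
    rw [← hss]
    exact lam_succ_lt n (s-1)
  have hlamsum : 0 < ∑ k ∈ Finset.range (n+1), lam n k * (c n m k * r ^ k) :=
    lam_sum_pos (c n m) (lam n) (n+1) s hs1 (Nat.succ_pos n) hpos ha0 hneg
      (lam_anti n) hstrict hr hroot
  have hdrop : ∑ k ∈ Finset.range (n+1), lam n k * (c n m k * r ^ k)
      = ∑ k ∈ Finset.range n, lam n k * (c n m k * r ^ k) := by
    rw [Finset.sum_range_succ, c_top_zero n m hmn]; ring
  have hM : 0 < ∑ j ∈ Finset.range n, cdiff n m j * r ^ j := by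
    have hle : ∑ k ∈ Finset.range n, lam n k * (c n m k * r ^ k) ≤
        ∑ j ∈ Finset.range n, cdiff n m j * r ^ j := by
      apply Finset.sum_le_sum
      intro j _
      have := mul_le_mul_of_nonneg_right (lam_mul_c_le_cdiff n m j) (pow_nonneg hr.le j)
      nlinarith [this]
    linarith [hlamsum, hdrop, hle]
  -- hence `N_{n,m+1}(r) > 0`
  have hNpos : 0 < genNarayana n (m+1) r := by
    rw [narayana_succ n m r, genNarayana_eq, hroot]
    have := mul_pos hr hM
    linarith
  rw [genNarayana_eq] at hNpos
  -- threshold for the coefficients of `N_{n,m+1}`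
  have hex' : ∃ k, (m+1) + 1 ≤ k * (n - (m+1)) := by
    refine ⟨m+2, ?_⟩
    have h1 : 1 ≤ n - (m+1) := by omega
    calc (m+1) + 1 = (m+2) * 1 := by ring
      _ ≤ (m+2) * (n - (m+1)) := Nat.mul_le_mul_left _ h1
  set s' := Nat.find hex' with hsdef'
  have hs_spec' : (m+1) + 1 ≤ s' * (n - (m+1)) := Nat.find_spec hex'
  have hs1' : 1 ≤ s' := by
    rcases Nat.eq_zero_or_pos s' with h0 | h0
    · rw [h0] at hs_spec'; simp at hs_spec'
    · exact h0
  have hpos' : ∀ k, k < s' → 0 ≤ c n (m+1) k := fun k hk =>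
    c_nonneg n (m+1) k hmn' (by have := Nat.find_min hex' hk; omega)
  have hneg' : ∀ k, s' ≤ k → c n (m+1) k ≤ 0 := fun k hk =>
    c_nonpos n (m+1) k hmn' (hs_spec'.trans (Nat.mul_le_mul_right _ hk))
  have ha0' : (1:ℝ) ≤ c n (m+1) 0 := by rw [c_zero]
  -- conclude
  by_contra hcon
  push_neg at hcon
  rcases eq_or_lt_of_le hcon with heq | hlt
  · rw [heq] at hroot'
    linarith [hNpos, hroot']
  · have := key_neg (c n (m+1)) (n+1) s' hs1' (Nat.succ_pos n) hpos' ha0' hneg'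
      hr' hlt hroot'
    linarith [hNpos, this]
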